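/- Let G₁, …, G₈ be the eight three-qubit GHZ states viewed in ℂ² ⊗ (ℂ² ⊗ ℂ²), and let k ≥ 1. For any two functions α, α' : Fin k → {1, …, 8}, there exist unitary operators U₁, …, U_k on the two-qubit space ℂ² ⊗ ℂ² such that G_{α'(1)} ⊗ G_{α'(2)} ⊗ ⋯ ⊗ G_{α'(k)} = ((I ⊗ U₁) ⊗ (I ⊗ U₂) ⊗ ⋯ ⊗ (I ⊗ U_k)) (G_{α(1)} ⊗ G_{α(2)} ⊗ ⋯ ⊗ G_{α(k)}) in the k-fold tensor power of ℂ² ⊗ (ℂ² ⊗ ℂ²). Hence any two tensor products of k GHZ states (in any order, with any composition) are related by a unitary acting trivially on the first qubit of every copy, i.e., acting only on the collaborating parties' 2k qubits. -/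

import Mathlib

open scoped InnerProductSpace

noncomputable section

/-- The standard basis kets `|0⟩, |1⟩` of a qubit `ℂ² = EuclideanSpace ℂ (Fin 2)`. -/
def ket2 (i : Fin 2) : EuclideanSpace ℂ (Fin 2) := EuclideanSpace.single i 1

/-- Tensor product of vectors of Euclidean spaces, realized concretely:
`(x ⊗ y) (i, j) = x i * y j`.  The induced inner product on
`EuclideanSpace ℂ (ι × κ)` is exactly the tensor-product inner product. -/
def tp {ι κ : Type*} [Fintype ι] [Fintype κ]
    (x : EuclideanSpace ℂ ι) (y : EuclideanSpace ℂ κ) : EuclideanSpace ℂ (ι × κ) :=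
  (WithLp.equiv 2 _).symm fun p => x p.1 * y p.2

/-- The three-qubit basis state `|abc⟩ = |a⟩ ⊗ |b⟩ ⊗ |c⟩`. -/
def ket3 (a b c : Fin 2) : EuclideanSpace ℂ (Fin 2 × Fin 2 × Fin 2) :=
  tp (ket2 a) (tp (ket2 b) (ket2 c))

/-- The eight three-qubit GHZ states `G₁, …, G₈` (indexed here by `0,…,7`). -/
def GHZ : Fin 8 → EuclideanSpace ℂ (Fin 2 × Fin 2 × Fin 2) :=
  ![((Real.sqrt 2 : ℂ))⁻¹ • (ket3 0 0 0 + ket3 1 1 1),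
    ((Real.sqrt 2 : ℂ))⁻¹ • (ket3 0 0 0 - ket3 1 1 1),
    ((Real.sqrt 2 : ℂ))⁻¹ • (ket3 0 0 1 + ket3 1 1 0),
    ((Real.sqrt 2 : ℂ))⁻¹ • (ket3 0 0 1 - ket3 1 1 0),
    ((Real.sqrt 2 : ℂ))⁻¹ • (ket3 0 1 0 + ket3 1 0 1),
    ((Real.sqrt 2 : ℂ))⁻¹ • (ket3 0 1 0 - ket3 1 0 1),
    ((Real.sqrt 2 : ℂ))⁻¹ • (ket3 1 0 0 + ket3 0 1 1),
    ((Real.sqrt 2 : ℂ))⁻¹ • (ket3 1 0 0 - ket3 0 1 1)]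

/-- The product vector `G_{α 1} ⊗ ⋯ ⊗ G_{α k}` in the `k`-fold tensor power of
`ℂ² ⊗ (ℂ² ⊗ ℂ²)`, realized on the index type `Fin k → Fin 2 × Fin 2 × Fin 2`. -/
def GHZprod (k : ℕ) (α : Fin k → Fin 8) :
    EuclideanSpace ℂ (Fin k → Fin 2 × Fin 2 × Fin 2) :=
  (WithLp.equiv 2 _).symm fun x => ∏ i, GHZ (α i) (x i)

/-- The operator `(I ⊗ U₁) ⊗ (I ⊗ U₂) ⊗ ⋯ ⊗ (I ⊗ U_k)` on the `k`-fold tensor power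
of `ℂ² ⊗ (ℂ² ⊗ ℂ²)`: each `U i` is a matrix acting on the last two qubits of the
`i`-th copy, and the identity acts on the first qubit of every copy. -/
def idTensorMatPow (k : ℕ) (U : Fin k → Matrix (Fin 2 × Fin 2) (Fin 2 × Fin 2) ℂ)
    (v : EuclideanSpace ℂ (Fin k → Fin 2 × Fin 2 × Fin 2)) :
    EuclideanSpace ℂ (Fin k → Fin 2 × Fin 2 × Fin 2) :=
  (WithLp.equiv 2 _).symm fun x =>
    ∑ y : Fin k → Fin 2 × Fin 2, (∏ i, U i (x i).2 (y i)) * v fun i => ((x i).1, y i)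

namespace GHZaux

lemma ket3_apply (a b c p q1 q2 : Fin 2) :
    ket3 a b c (p, q1, q2) =
      (if p = a then (1:ℂ) else 0) * ((if q1 = b then (1:ℂ) else 0) * (if q2 = c then (1:ℂ) else 0)) := by
  simp [ket3, tp, ket2, EuclideanSpace.single_apply, WithLp.equiv_symm_apply, PiLp.toLp_apply]

def s : Fin 8 → Fin 2 × Fin 2 :=
  ![(0,0),(0,0),(0,1),(0,1),(1,0),(1,0),(1,1),(1,1)]

def ε (a : Fin 8) (p : Fin 2) : ℂ :=
  if ((a = 1 ∨ a = 3 ∨ a = 5) ∧ p = 1) ∨ (a = 7 ∧ p = 0) then -1 else 1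

lemma ε_pm (a : Fin 8) (p : Fin 2) : ε a p = 1 ∨ ε a p = -1 := by
  unfold ε; split_ifs <;> simp

lemma ε_sq (a : Fin 8) (p : Fin 2) : ε a p * ε a p = 1 := by
  rcases ε_pm a p with h | h <;> rw [h] <;> norm_num

set_option maxHeartbeats 2000000 in
lemma key_pt (a : Fin 8) (p : Fin 2) (q : Fin 2 × Fin 2) :
    GHZ a (p, q) = ((Real.sqrt 2 : ℂ))⁻¹ * ε a p * (if q = s a + (p, p) then 1 else 0) := by
  obtain ⟨q1, q2⟩ := q
  fin_cases a <;>
    simp only [GHZ, Matrix.cons_val_zero, Matrix.cons_val_one, Matrix.head_cons,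
      Fin.isValue, PiLp.smul_apply, PiLp.add_apply, PiLp.sub_apply, smul_eq_mul] <;>
    fin_cases p <;> fin_cases q1 <;> fin_cases q2 <;>
    norm_num [ket3_apply, s, ε, Prod.ext_iff, Fin.ext_iff]
      <;> norm_num [Fin.ext_iff, show ((7:Fin 8):ℕ)=7 from rfl, show ((3:Fin 8):ℕ)=3 from rfl, show ((5:Fin 8):ℕ)=5 from rfl, show ((2:Fin 2):ℕ)=0 from rfl, show ((1 + 1:Fin 2):ℕ)=0 from rfl]

def d (a a' : Fin 8) (y : Fin 2 × Fin 2) : ℂ :=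
  if y = s a then ε a 0 * ε a' 0 else if y = s a + (1, 1) then ε a 1 * ε a' 1 else 1

def Umat (a a' : Fin 8) : Matrix (Fin 2 × Fin 2) (Fin 2 × Fin 2) ℂ :=
  fun q y => d a a' y * (if q = y + s a + s a' then 1 else 0)

lemma d_pm (a a' : Fin 8) (y : Fin 2 × Fin 2) : d a a' y = 1 ∨ d a a' y = -1 := by
  unfold d
  split_ifs with h1 h2
  · rcases ε_pm a 0 with h | h <;> rcases ε_pm a' 0 with h' | h' <;> rw [h, h'] <;> norm_num
  · rcases ε_pm a 1 with h | h <;> rcases ε_pm a' 1 with h' | h' <;> rw [h, h'] <;> norm_num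
  · left; rfl

lemma star_d_mul_d (a a' : Fin 8) (y : Fin 2 × Fin 2) : star (d a a' y) * d a a' y = 1 := by
  rcases d_pm a a' y with h | h <;> rw [h] <;> simp

lemma U_unitary (a a' : Fin 8) : Umat a a' ∈ Matrix.unitaryGroup (Fin 2 × Fin 2) ℂ := by
  rw [Matrix.mem_unitaryGroup_iff']
  ext y z
  simp only [Matrix.mul_apply, Matrix.star_apply, Umat, Matrix.one_apply]
  rw [Finset.sum_eq_single (y + s a + s a')]
  · rw [if_pos rfl, mul_one]
    by_cases h : y = z
    · subst h
      rw [if_pos rfl, if_pos rfl, mul_one, star_d_mul_d]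
    · have hyz : y + s a + s a' ≠ z + s a + s a' :=
        fun hc => h (add_right_cancel (add_right_cancel hc))
      rw [if_neg hyz, if_neg h]
      simp
  · intro w _ hw
    rw [if_neg hw]
    simp
  · intro h
    exact absurd (Finset.mem_univ _) h

lemma add_magic : ∀ (v u : Fin 2 × Fin 2) (p : Fin 2), v + (p, p) + v + u = u + (p, p) := by decide

lemma add_zero_pair : ∀ v : Fin 2 × Fin 2, v + ((0 : Fin 2), (0 : Fin 2)) = v := by decide

lemma add_one_ne : ∀ v : Fin 2 × Fin 2, v + ((1 : Fin 2), (1 : Fin 2)) ≠ v := by decide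

lemma key (a a' : Fin 8) (p : Fin 2) (q : Fin 2 × Fin 2) :
    GHZ a' (p, q) = ∑ y : Fin 2 × Fin 2, Umat a a' q y * GHZ a (p, y) := by
  rw [Finset.sum_eq_single (s a + (p, p))]
  · rw [key_pt a p, if_pos rfl, mul_one, key_pt a']
    unfold Umat d
    rw [add_magic]
    fin_cases p <;> simp only [Fin.mk_zero, Fin.mk_one]
    · rw [if_pos (add_zero_pair (s a))]
      by_cases hq : q = s a' + ((0 : Fin 2), (0 : Fin 2))
      · rw [if_pos hq]
        linear_combination (-((Real.sqrt 2 : ℂ))⁻¹ * ε a' 0) * ε_sq a 0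
      · rw [if_neg hq]
        ring
    · rw [if_neg (add_one_ne (s a)), if_pos trivial]
      by_cases hq : q = s a' + ((1 : Fin 2), (1 : Fin 2))
      · rw [if_pos hq]
        linear_combination (-((Real.sqrt 2 : ℂ))⁻¹ * ε a' 1) * ε_sq a 1
      · rw [if_neg hq]
        ring
  · intro y _ hy
    rw [key_pt a p, if_neg hy]
    ring
  · intro h
    exact absurd (Finset.mem_univ _) h

end GHZaux

/-- For `k ≥ 1` and any two functions `α, α' : Fin k → {1,…,8}`,
there exist unitaries `U₁, …, U_k` on the two-qubit space `ℂ² ⊗ ℂ²` such that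
`G_{α' 1} ⊗ ⋯ ⊗ G_{α' k} = ((I ⊗ U₁) ⊗ ⋯ ⊗ (I ⊗ U_k)) (G_{α 1} ⊗ ⋯ ⊗ G_{α k})`:
any two tensor products of `k` GHZ states are related by a unitary acting trivially
on the first qubit of every copy. -/
theorem GHZ_tensor_products_related_by_local_unitaries
    (k : ℕ) (hk : 1 ≤ k) (α α' : Fin k → Fin 8) :
    ∃ U : Fin k → Matrix (Fin 2 × Fin 2) (Fin 2 × Fin 2) ℂ,
      (∀ i, U i ∈ Matrix.unitaryGroup (Fin 2 × Fin 2) ℂ) ∧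
      GHZprod k α' = idTensorMatPow k U (GHZprod k α) := by
  refine ⟨fun i => GHZaux.Umat (α i) (α' i), fun i => GHZaux.U_unitary _ _, ?_⟩
  unfold GHZprod idTensorMatPow
  refine congrArg _ (funext fun x => ?_)
  simp only [WithLp.equiv_symm_apply, PiLp.toLp_apply]
  calc ∏ i, GHZ (α' i) (x i)
      = ∏ i, ∑ y : Fin 2 × Fin 2,
          GHZaux.Umat (α i) (α' i) (x i).2 y * GHZ (α i) ((x i).1, y) :=
        Finset.prod_congr rfl fun i _ => GHZaux.key (α i) (α' i) (x i).1 (x i).2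
    _ = ∑ y : Fin k → Fin 2 × Fin 2, ∏ i,
          GHZaux.Umat (α i) (α' i) (x i).2 (y i) * GHZ (α i) ((x i).1, y i) := by
        rw [Finset.prod_univ_sum]
        rw [Fintype.piFinset_univ]
    _ = ∑ y : Fin k → Fin 2 × Fin 2,
          (∏ i, GHZaux.Umat (α i) (α' i) (x i).2 (y i)) *
            ∏ i, GHZ (α i) ((x i).1, y i) := by
        refine Finset.sum_congr rfl fun y _ => ?_
        rw [Finset.prod_mul_distrib]

end
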